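/- (Burning algorithm) Let G be an Eulerian digraph with sink, and let β be the chip configuration β(v) = outdeg(v) − indeg(v) (which is nonnegative). A stable chip configuration σ is recurrent if and only if (σ + β)° = σ. Moreover, if σ is recurrent, then each non-sink vertex fires exactly once during the stabilization of σ + β. -/

import Mathlib

/-!
The burning algorithm (Dhar; Holroyd et al., Lemma 4.1) on an Eulerian digraph with
sink: a stable configuration σ is recurrent iff (σ + β)° = σ, where
β(v) = outdeg(v) − indeg(v); moreover in that case each non-sink vertex fires exactly
once during the stabilization of σ + β.
-/

/-- The out-degree of a vertex. -/
def outdeg {V E : Type} [Fintype E] [DecidableEq V] (tail : E → V) (v : V) : ℕ :=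
  (Finset.univ.filter (fun e => tail e = v)).card

/-- The number of edges from `v` to `w`. -/
def numEdges {V E : Type} [Fintype E] [DecidableEq V] (tail head : E → V) (v w : V) : ℕ :=
  (Finset.univ.filter (fun e => tail e = v ∧ head e = w)).card

/-- The vertices other than the (global) sink `s`. -/
abbrev Vne {V : Type} (s : V) : Type := {v : V // v ≠ s}

/-- Firing the vertex `v`. -/
def fire {V E : Type} [Fintype E] [DecidableEq V] {s : V} (tail head : E → V)
    (σ : Vne s → ℕ) (v : Vne s) : Vne s → ℕ :=
  fun w =>
    if w = v then σ v + numEdges tail head v.1 v.1 - outdeg tail v.1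
    else σ w + numEdges tail head v.1 w.1

/-- A (non-sink) vertex is active when it has at least as many chips as outgoing edges. -/
def Active {V E : Type} [Fintype E] [DecidableEq V] {s : V} (tail : E → V)
    (σ : Vne s → ℕ) (v : Vne s) : Prop :=
  outdeg tail v.1 ≤ σ v

/-- The result of firing the vertices in the list `l` in order, starting from `σ`. -/
def fireList {V E : Type} [Fintype E] [DecidableEq V] {s : V} (tail head : E → V)
    (σ : Vne s → ℕ) : List (Vne s) → (Vne s → ℕ)
  | [] => σ
  | v :: l => fireList tail head (fire tail head σ v) l

/-- The firing sequence `l` is legal from `σ`. -/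
def Legal {V E : Type} [Fintype E] [DecidableEq V] {s : V} (tail head : E → V)
    (σ : Vne s → ℕ) : List (Vne s) → Prop
  | [] => True
  | v :: l => Active tail σ v ∧ Legal tail head (fire tail head σ v) l

/-- A configuration is stable when no non-sink vertex is active. -/
def Stable {V E : Type} [Fintype E] [DecidableEq V] {s : V} (tail : E → V)
    (σ : Vne s → ℕ) : Prop :=
  ∀ v, σ v < outdeg tail v.1

/-- `σ` is accessible: from any chip configuration `ζ` one can obtain `σ` by adding
some chips and then performing a legal sequence of firings of active vertices. -/
def Accessible {V E : Type} [Fintype E] [DecidableEq V] {s : V} (tail head : E → V)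
    (σ : Vne s → ℕ) : Prop :=
  ∀ ζ : Vne s → ℕ, ∃ (β : Vne s → ℕ) (l : List (Vne s)),
    Legal tail head (fun v => ζ v + β v) l ∧ fireList tail head (fun v => ζ v + β v) l = σ

/-- A chip configuration is recurrent when it is both stable and accessible. -/
def Recurrent {V E : Type} [Fintype E] [DecidableEq V] {s : V} (tail head : E → V)
    (σ : Vne s → ℕ) : Prop :=
  Stable tail σ ∧ Accessible tail head σ

/-- The in-degree of a vertex. -/
def indeg {V E : Type} [Fintype E] [DecidableEq V] (head : E → V) (v : V) : ℕ :=
  (Finset.univ.filter (fun e => head e = v)).card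


set_option linter.unusedSectionVars false

section BurnAux

variable {V E : Type} [Fintype V] [DecidableEq V] [Fintype E]

theorem fireList_append (tail head : E → V) {s : V} (τ : Vne s → ℕ) (l₁ l₂ : List (Vne s)) :
    fireList tail head τ (l₁ ++ l₂) = fireList tail head (fireList tail head τ l₁) l₂ := by
  induction l₁ generalizing τ with
  | nil => rfl
  | cons a l ih => simp [fireList, ih]

theorem legal_append (tail head : E → V) {s : V} {τ : Vne s → ℕ} {l₁ l₂ : List (Vne s)} :
    Legal tail head τ (l₁ ++ l₂) ↔
      Legal tail head τ l₁ ∧ Legal tail head (fireList tail head τ l₁) l₂ := by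
  induction l₁ generalizing τ with
  | nil => simp [Legal, fireList]
  | cons a l ih => simp [Legal, fireList, ih, and_assoc]

theorem outdeg_eq_sum (tail head : E → V) (v : V) :
    outdeg tail v = ∑ w : V, numEdges tail head v w := by
  rw [outdeg]
  rw [Finset.card_eq_sum_card_fiberwise (f := head) (t := Finset.univ) (fun x _ => Finset.mem_univ _)]
  refine Finset.sum_congr rfl fun w _ => ?_
  rw [numEdges, Finset.filter_filter]

theorem indeg_eq_sum (tail head : E → V) (v : V) :
    indeg head v = ∑ w : V, numEdges tail head w v := by
  rw [indeg]
  rw [Finset.card_eq_sum_card_fiberwise (f := tail) (t := Finset.univ) (fun x _ => Finset.mem_univ _)]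
  refine Finset.sum_congr rfl fun w _ => ?_
  rw [numEdges, Finset.filter_filter]
  congr 1
  ext e
  simp [and_comm]

theorem numEdges_s (tail head : E → V) {s : V} (hs : outdeg tail s = 0) (w : V) :
    numEdges tail head s w = 0 := by
  have h : (Finset.univ.filter (fun e => tail e = s ∧ head e = w)) ⊆
      (Finset.univ.filter (fun e => tail e = s)) := by
    intro e he
    simp only [Finset.mem_filter] at he ⊢
    exact ⟨he.1, he.2.1⟩
  have := Finset.card_le_card h
  rw [outdeg] at hs
  rw [numEdges]
  omega

theorem sum_Vne {s : V} (f : V → ℕ) : (∑ w : Vne s, f w.1) + f s = ∑ w : V, f w := by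
  classical
  have h1 : (∑ w : Vne s, f w.1) = ∑ w ∈ Finset.univ.filter (· ≠ s), f w := by
    rw [Finset.sum_subtype (p := fun x => x ≠ s) (Finset.univ.filter (· ≠ s)) (by simp) f]
  have h2 := Finset.sum_filter_add_sum_filter_not Finset.univ (· ≠ s) f
  have h3 : ∑ w ∈ Finset.univ.filter (fun x => ¬ x ≠ s), f w = f s := by
    have : Finset.univ.filter (fun x : V => ¬ x ≠ s) = {s} := by
      ext x; simp
    rw [this, Finset.sum_singleton]
  rw [h1, ← h2, h3]

theorem sum_Vne_indeg (tail head : E → V) {s : V} (hs : outdeg tail s = 0) (v : V) :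
    (∑ w : Vne s, numEdges tail head w.1 v) = indeg head v := by
  have := sum_Vne (s := s) (fun w => numEdges tail head w v)
  rw [numEdges_s tail head hs] at this
  rw [indeg_eq_sum tail head]
  omega

theorem sum_Vne_outdeg (tail head : E → V) {s : V} (w : V) :
    (∑ v : Vne s, numEdges tail head w v.1) + numEdges tail head w s = outdeg tail w := by
  rw [sum_Vne (s := s) (fun v => numEdges tail head w v), outdeg_eq_sum tail head]

end BurnAux
section BurnAux2

variable {V E : Type} [Fintype V] [DecidableEq V] [Fintype E]

theorem fireList_formula (tail head : E → V) {s : V} (τ : Vne s → ℕ) (l : List (Vne s))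
    (h : Legal tail head τ l) (v : Vne s) :
    (fireList tail head τ l v : ℤ) =
      (τ v : ℤ) + (∑ w : Vne s, (l.count w : ℤ) * (numEdges tail head w.1 v.1 : ℤ))
        - (l.count v : ℤ) * (outdeg tail v.1 : ℤ) := by
  induction l generalizing τ with
  | nil => simp [fireList]
  | cons a l ih =>
    obtain ⟨hA, hL⟩ := h
    have ih' := ih (fire tail head τ a) hL
    show (fireList tail head (fire tail head τ a) l v : ℤ) = _
    rw [ih']
    have hcnt : ∀ w : Vne s, (((a :: l).count w : ℕ) : ℤ)
        = (l.count w : ℤ) + if w = a then 1 else 0 := by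
      intro w
      by_cases hw : w = a <;> simp [List.count_cons, hw] <;> exact fun h => hw (Subtype.ext h.symm)
    simp only [hcnt, add_mul, one_mul, zero_mul, ite_mul, Finset.sum_add_distrib,
      Finset.sum_ite_eq' Finset.univ a, Finset.mem_univ, if_true]
    have hAle : outdeg tail a.1 ≤ τ a := hA
    by_cases hv : v = a
    · subst hv
      have hf : fire tail head τ v v
          = τ v + numEdges tail head v.1 v.1 - outdeg tail v.1 := by simp [fire]
      rw [hf]
      have hle : outdeg tail v.1 ≤ τ v + numEdges tail head v.1 v.1 :=
        le_trans hAle (Nat.le_add_right _ _)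
      rw [if_pos rfl]
      push_cast [hle]
      ring
    · have hf : fire tail head τ a v = τ v + numEdges tail head a.1 v.1 := by
        simp [fire, hv]
      rw [hf, if_neg hv]
      push_cast
      ring

theorem lap (tail head : E → V) {s : V} (σ : Vne s → ℕ) (hσ : Stable tail σ)
    (y : Vne s → ℕ) (τ : Vne s → ℕ)
    (hτ : ∀ v, (τ v : ℤ) = (σ v : ℤ) + (y v : ℤ) * (outdeg tail v.1 : ℤ)
      - ∑ w : Vne s, (y w : ℤ) * (numEdges tail head w.1 v.1 : ℤ))
    (l : List (Vne s)) (h : Legal tail head τ l) : ∀ v, l.count v ≤ y v := by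
  induction l using List.reverseRecOn with
  | nil => simp
  | append_singleton l u ih =>
    have h1 := (legal_append tail head).mp h
    have hcounts := ih h1.1
    have hA : Active tail (fireList tail head τ l) u := h1.2.1
    have key : l.count u < y u := by
      by_contra hno
      push_neg at hno
      have heq : l.count u = y u := le_antisymm (hcounts u) hno
      have hF := fireList_formula tail head τ l h1.1 u
      have hsum : (∑ w : Vne s, (l.count w : ℤ) * (numEdges tail head w.1 u.1 : ℤ))
          ≤ ∑ w : Vne s, (y w : ℤ) * (numEdges tail head w.1 u.1 : ℤ) := by
        refine Finset.sum_le_sum fun w _ => ?_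
        have := hcounts w
        have h0 : (0:ℤ) ≤ (numEdges tail head w.1 u.1 : ℤ) := by positivity
        exact mul_le_mul_of_nonneg_right (by exact_mod_cast this) h0
      have hle : (fireList tail head τ l u : ℤ) ≤ (σ u : ℤ) := by
        rw [hF, hτ u, heq]
        linarith
      have hs1 : (σ u : ℤ) < (outdeg tail u.1 : ℤ) := by exact_mod_cast hσ u
      have hs2 : (outdeg tail u.1 : ℤ) ≤ (fireList tail head τ l u : ℤ) := by
        exact_mod_cast hA
      linarith
    intro v
    rw [List.count_append]
    by_cases hv : v = u
    · subst hv
      simpa using key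
    · have : [u].count v = 0 := List.count_eq_zero.mpr (by simp [hv])
      rw [this]
      simpa using hcounts v

theorem total_formula (tail head : E → V) {s : V} (τ : Vne s → ℕ) (l : List (Vne s))
    (h : Legal tail head τ l) :
    (∑ v : Vne s, (fireList tail head τ l v : ℤ)) =
      ∑ v : Vne s, (τ v : ℤ)
        - ∑ w : Vne s, (l.count w : ℤ) * (numEdges tail head w.1 s : ℤ) := by
  have hF : ∀ v : Vne s, (fireList tail head τ l v : ℤ) = _ :=
    fun v => fireList_formula tail head τ l h v
  rw [Finset.sum_congr rfl fun v _ => hF v]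
  rw [Finset.sum_sub_distrib, Finset.sum_add_distrib]
  have hswap : (∑ v : Vne s, ∑ w : Vne s,
      (l.count w : ℤ) * (numEdges tail head w.1 v.1 : ℤ))
      = ∑ w : Vne s, (l.count w : ℤ) * ∑ v : Vne s, (numEdges tail head w.1 v.1 : ℤ) := by
    rw [Finset.sum_comm]
    exact Finset.sum_congr rfl fun w _ => by rw [Finset.mul_sum]
  rw [hswap]
  have hdeg : ∀ w : Vne s, (∑ v : Vne s, (numEdges tail head w.1 v.1 : ℤ))
      = (outdeg tail w.1 : ℤ) - (numEdges tail head w.1 s : ℤ) := by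
    intro w
    have h := congrArg (Nat.cast : ℕ → ℤ) (sum_Vne_outdeg tail head (s := s) w.1)
    push_cast at h
    linarith
  simp only [hdeg, mul_sub, Finset.sum_sub_distrib]
  ring

end BurnAux2
section BurnAux3

variable {V E : Type} [Fintype V] [DecidableEq V] [Fintype E]

theorem count_bound (tail head : E → V) {s : V} (τ : Vne s → ℕ) {z : V}
    (hz : Relation.ReflTransGen (fun a b => ∃ e, tail e = a ∧ head e = b) z s) :
    ∀ (hzs : z ≠ s), ∃ B : ℕ, ∀ l : List (Vne s), Legal tail head τ l →
      l.count ⟨z, hzs⟩ ≤ B := by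
  induction hz using Relation.ReflTransGen.head_induction_on with
  | refl => intro hzs; exact absurd rfl hzs
  | @head a c hac hcs ih =>
    intro hzs
    obtain ⟨e, he1, he2⟩ := hac
    have hedge : 1 ≤ numEdges tail head a c := by
      rw [numEdges]
      refine Finset.card_pos.mpr ⟨e, ?_⟩
      simp [he1, he2]
    have htot : ∀ l : List (Vne s), Legal tail head τ l →
        (∑ w : Vne s, (l.count w : ℤ) * (numEdges tail head w.1 s : ℤ))
          ≤ ∑ v : Vne s, (τ v : ℤ) := by
      intro l hl
      have h1 := total_formula tail head τ l hl
      have h2 : (0:ℤ) ≤ ∑ v : Vne s, (fireList tail head τ l v : ℤ) :=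
        Finset.sum_nonneg fun v _ => by positivity
      linarith
    by_cases hcS : c = s
    · rw [hcS] at hedge
      refine ⟨∑ v : Vne s, τ v, fun l hl => ?_⟩
      have h3 : ((l.count ⟨a, hzs⟩ : ℕ) : ℤ) * (numEdges tail head a s : ℤ)
          ≤ ∑ w : Vne s, (l.count w : ℤ) * (numEdges tail head w.1 s : ℤ) := by
        refine Finset.single_le_sum (f := fun w : Vne s =>
          (l.count w : ℤ) * (numEdges tail head w.1 s : ℤ))
          (fun w _ => by positivity) (Finset.mem_univ _)
      have h4 : ((l.count ⟨a, hzs⟩ : ℕ) : ℤ) ≤ ((l.count ⟨a, hzs⟩ : ℕ) : ℤ) * (numEdges tail head a s : ℤ) := by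
        nlinarith [hedge, (by positivity : (0:ℤ) ≤ ((l.count ⟨a, hzs⟩ : ℕ) : ℤ))]
      have h5 := htot l hl
      have : ((l.count ⟨a, hzs⟩ : ℕ) : ℤ) ≤ ∑ v : Vne s, (τ v : ℤ) := by linarith
      have hc : (∑ v : Vne s, (τ v : ℤ)) = ((∑ v : Vne s, τ v : ℕ) : ℤ) := by push_cast; ring
      rw [hc] at this
      exact_mod_cast this
    · obtain ⟨Bc, hBc⟩ := ih hcS
      refine ⟨(∑ v : Vne s, τ v) + Bc * outdeg tail c, fun l hl => ?_⟩
      set cv : Vne s := ⟨c, hcS⟩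
      have hF := fireList_formula tail head τ l hl cv
      have h0 : (0:ℤ) ≤ (fireList tail head τ l cv : ℤ) := by positivity
      -- single term lower bound
      have h3 : ((l.count ⟨a, hzs⟩ : ℕ) : ℤ) * (numEdges tail head a c : ℤ)
          ≤ ∑ w : Vne s, (l.count w : ℤ) * (numEdges tail head w.1 cv.1 : ℤ) := by
        refine Finset.single_le_sum (f := fun w : Vne s =>
          (l.count w : ℤ) * (numEdges tail head w.1 cv.1 : ℤ))
          (fun w _ => by positivity) (Finset.mem_univ _)
      have h4 : ((l.count ⟨a, hzs⟩ : ℕ) : ℤ) ≤ ((l.count ⟨a, hzs⟩ : ℕ) : ℤ) * (numEdges tail head a c : ℤ) := by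
        nlinarith [hedge, (by positivity : (0:ℤ) ≤ ((l.count ⟨a, hzs⟩ : ℕ) : ℤ))]
      -- endpoint at cv bounded by total
      have h6 : (fireList tail head τ l cv : ℤ) ≤ ∑ v : Vne s, (fireList tail head τ l v : ℤ) := by
        refine Finset.single_le_sum (f := fun v : Vne s => (fireList tail head τ l v : ℤ))
          (fun v _ => by positivity) (Finset.mem_univ _)
      have h7 : (∑ v : Vne s, (fireList tail head τ l v : ℤ)) ≤ ∑ v : Vne s, (τ v : ℤ) := by
        have h1 := total_formula tail head τ l hl
        have h2 : (0:ℤ) ≤ ∑ w : Vne s, (l.count w : ℤ) * (numEdges tail head w.1 s : ℤ) :=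
          Finset.sum_nonneg fun w _ => by positivity
        linarith
      have h8 : ((l.count cv : ℕ) : ℤ) ≤ (Bc : ℤ) := by exact_mod_cast hBc l hl
      have h9 : (0:ℤ) ≤ (outdeg tail c : ℤ) := by positivity
      have h10 : ((l.count ⟨a, hzs⟩ : ℕ) : ℤ)
          ≤ (∑ v : Vne s, (τ v : ℤ)) + (Bc : ℤ) * (outdeg tail c : ℤ) := by
        nlinarith
      have hc : (∑ v : Vne s, (τ v : ℤ)) = ((∑ v : Vne s, τ v : ℕ) : ℤ) := by push_cast; ring
      rw [hc] at h10
      exact_mod_cast h10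

theorem length_eq_sum_count {s : V} (l : List (Vne s)) :
    l.length = ∑ v : Vne s, l.count v := by
  induction l with
  | nil => simp
  | cons a l ih =>
    have : ∀ v : Vne s, (a :: l).count v = l.count v + if v = a then 1 else 0 := by
      intro v; by_cases hv : v = a <;> simp [List.count_cons, hv] <;> exact fun h => hv (Subtype.ext h.symm)
    simp only [this, Finset.sum_add_distrib, Finset.sum_ite_eq' Finset.univ a,
      Finset.mem_univ, if_true, List.length_cons, ih]

theorem exists_stab (tail head : E → V) {s : V}
    (hglobal : ∀ v : V,
      Relation.ReflTransGen (fun a b => ∃ e, tail e = a ∧ head e = b) v s)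
    (τ : Vne s → ℕ) :
    ∃ l : List (Vne s), Legal tail head τ l ∧ Stable tail (fireList tail head τ l) := by
  classical
  have hB : ∀ v : Vne s, ∃ B : ℕ, ∀ l : List (Vne s), Legal tail head τ l → l.count v ≤ B := by
    intro v
    have := count_bound tail head τ (hglobal v.1) v.2
    simpa using this
  choose B hBs using hB
  have hlen : ∀ l : List (Vne s), Legal tail head τ l → l.length ≤ ∑ v : Vne s, B v := by
    intro l hl
    rw [length_eq_sum_count]
    exact Finset.sum_le_sum fun v _ => hBs v l hl
  have aux : ∀ (n : ℕ) (τ' : Vne s → ℕ),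
      (∀ l : List (Vne s), Legal tail head τ' l → l.length ≤ n) →
      ∃ l : List (Vne s), Legal tail head τ' l ∧ Stable tail (fireList tail head τ' l) := by
    intro n
    induction n with
    | zero =>
      intro τ' hb
      by_cases hst : Stable tail τ'
      · exact ⟨[], trivial, hst⟩
      · exfalso
        rw [Stable] at hst
        push_neg at hst
        obtain ⟨v, hv⟩ := hst
        have := hb [v] ⟨hv, trivial⟩
        simp at this
    | succ n ih =>
      intro τ' hb
      by_cases hst : Stable tail τ'
      · exact ⟨[], trivial, hst⟩
      · rw [Stable] at hst
        push_neg at hst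
        obtain ⟨v, hv⟩ := hst
        have hb' : ∀ l : List (Vne s), Legal tail head (fire tail head τ' v) l → l.length ≤ n := by
          intro l hl
          have := hb (v :: l) ⟨hv, hl⟩
          simpa using this
        obtain ⟨l, hl, hstab⟩ := ih (fire tail head τ' v) hb'
        exact ⟨v :: l, ⟨hv, hl⟩, hstab⟩
  exact aux (∑ v : Vne s, B v) τ hlen

end BurnAux3
section BurnAux4

variable {V E : Type} [Fintype V] [DecidableEq V] [Fintype E]

theorem sum_numEdges_le_indeg (tail head : E → V) {s : V} (hs : outdeg tail s = 0)
    (W : Finset (Vne s)) (v : V) :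
    (∑ w ∈ W, numEdges tail head w.1 v) ≤ indeg head v := by
  rw [← sum_Vne_indeg tail head hs v]
  exact Finset.sum_le_sum_of_subset (Finset.subset_univ W)

theorem sum_numEdges_le_outdeg (tail head : E → V) {s : V}
    (U : Finset (Vne s)) (w : V) :
    (∑ v ∈ U, numEdges tail head w v.1) ≤ outdeg tail w := by
  rw [outdeg_eq_sum tail head]
  have h1 : (∑ v ∈ U, numEdges tail head w v.1)
      = ∑ y ∈ U.image Subtype.val, numEdges tail head w y := by
    rw [Finset.sum_image (fun x _ y _ h => Subtype.ext h)]
  rw [h1]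
  exact Finset.sum_le_sum_of_subset (Finset.subset_univ _)

/-- The "no forbidden subconfiguration" property. -/
def AllowedC (tail head : E → V) (s : V) (σ : Vne s → ℕ) : Prop :=
  ∀ W : Finset (Vne s), W.Nonempty →
    ∃ v ∈ W, (∑ w ∈ W, numEdges tail head w.1 v.1) ≤ σ v

theorem allowed_fire (tail head : E → V) {s : V} {τ : Vne s → ℕ} {u : Vne s}
    (hA : Active tail τ u) (h : AllowedC tail head s τ) :
    AllowedC tail head s (fire tail head τ u) := by
  intro W hW
  by_cases huW : u ∈ W
  · by_cases hWu : (W.erase u).Nonempty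
    · obtain ⟨v, hvW, hv⟩ := h (W.erase u) hWu
      have hvu : v ≠ u := (Finset.mem_erase.mp hvW).1
      refine ⟨v, (Finset.mem_erase.mp hvW).2, ?_⟩
      have hf : fire tail head τ u v = τ v + numEdges tail head u.1 v.1 := by
        simp [fire, hvu]
      rw [hf, ← Finset.sum_erase_add W _ huW]
      exact add_le_add_left hv _
    · have hWsing : W = {u} := by
        rcases (Finset.erase_eq_empty_iff W u).mp
          (Finset.not_nonempty_iff_eq_empty.mp hWu) with h1 | h1
        · exact absurd (h1 ▸ huW) (Finset.notMem_empty u)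
        · exact h1
      subst hWsing
      refine ⟨u, Finset.mem_singleton_self u, ?_⟩
      rw [Finset.sum_singleton]
      have hf : fire tail head τ u u
          = τ u + numEdges tail head u.1 u.1 - outdeg tail u.1 := by simp [fire]
      rw [hf]
      have : outdeg tail u.1 ≤ τ u := hA
      omega
  · obtain ⟨v, hvW, hv⟩ := h W hW
    have hvu : v ≠ u := fun hh => huW (hh ▸ hvW)
    refine ⟨v, hvW, ?_⟩
    have hf : fire tail head τ u v = τ v + numEdges tail head u.1 v.1 := by
      simp [fire, hvu]
    rw [hf]
    exact le_trans hv (Nat.le_add_right _ _)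

theorem allowed_fireList (tail head : E → V) {s : V} {τ : Vne s → ℕ} {l : List (Vne s)}
    (hl : Legal tail head τ l) (h : AllowedC tail head s τ) :
    AllowedC tail head s (fireList tail head τ l) := by
  induction l generalizing τ with
  | nil => exact h
  | cons a l ih => exact ih hl.2 (allowed_fire tail head hl.1 h)

theorem exists_first_split {α : Type} (P : α → Prop) [DecidablePred P] :
    ∀ l : List α, (∃ x ∈ l, P x) →
      ∃ p v q, l = p ++ v :: q ∧ P v ∧ ∀ x ∈ p, ¬ P x := by
  intro l
  induction l with
  | nil => simp
  | cons a l ih =>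
    intro h
    by_cases ha : P a
    · exact ⟨[], a, l, rfl, ha, by simp⟩
    · have h' : ∃ x ∈ l, P x := by
        obtain ⟨x, hx, hPx⟩ := h
        rcases List.mem_cons.mp hx with h1 | h1
        · exact absurd (h1 ▸ hPx) ha
        · exact ⟨x, h1, hPx⟩
      obtain ⟨p, v, q, h1, h2, h3⟩ := ih h'
      refine ⟨a :: p, v, q, by simp [h1], h2, ?_⟩
      intro x hx
      rcases List.mem_cons.mp hx with h4 | h4
      · exact h4 ▸ ha
      · exact h3 x h4

end BurnAux4
section BurnAux5

variable {V E : Type} [Fintype V] [DecidableEq V] [Fintype E]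

theorem beta_formula (tail head : E → V) {s : V} (hs : outdeg tail s = 0)
    (heul : ∀ v : V, v ≠ s → indeg head v ≤ outdeg tail v) (σ : Vne s → ℕ) (v : Vne s) :
    ((σ v + (outdeg tail v.1 - indeg head v.1) : ℕ) : ℤ)
      = (σ v : ℤ) + (((1:ℕ) : ℤ)) * (outdeg tail v.1 : ℤ)
        - ∑ w : Vne s, (((1:ℕ) : ℤ)) * (numEdges tail head w.1 v.1 : ℤ) := by
  have h1 : indeg head v.1 ≤ outdeg tail v.1 := heul v.1 v.2
  have h2 := sum_Vne_indeg tail head hs v.1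
  have h3 : (∑ w : Vne s, (((1:ℕ):ℤ)) * (numEdges tail head w.1 v.1 : ℤ))
      = (indeg head v.1 : ℤ) := by
    rw [show (∑ w : Vne s, (((1:ℕ):ℤ)) * (numEdges tail head w.1 v.1 : ℤ))
        = ∑ w : Vne s, (numEdges tail head w.1 v.1 : ℤ) from by push_cast; ring_nf]
    rw [← h2]; push_cast; ring
  rw [h3]; push_cast [h1]; ring

theorem count_le_one (tail head : E → V) {s : V} (hs : outdeg tail s = 0)
    (heul : ∀ v : V, v ≠ s → indeg head v ≤ outdeg tail v) (σ : Vne s → ℕ)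
    (hσ : Stable tail σ) {l : List (Vne s)}
    (hleg : Legal tail head (fun v => σ v + (outdeg tail v.1 - indeg head v.1)) l) :
    ∀ v, l.count v ≤ 1 := by
  intro v
  simpa using lap tail head σ hσ (fun _ => 1) _
    (fun v => beta_formula tail head hs heul σ v) l hleg v

theorem counts_one_of_endpoint (tail head : E → V) {s : V} (hs : outdeg tail s = 0)
    (heul : ∀ v : V, v ≠ s → indeg head v ≤ outdeg tail v)
    (hglobal : ∀ v : V,
      Relation.ReflTransGen (fun a b => ∃ e, tail e = a ∧ head e = b) v s)
    (σ : Vne s → ℕ) (hσ : Stable tail σ) (l : List (Vne s))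
    (hleg : Legal tail head (fun v => σ v + (outdeg tail v.1 - indeg head v.1)) l)
    (hend : fireList tail head (fun v => σ v + (outdeg tail v.1 - indeg head v.1)) l = σ) :
    ∀ v, l.count v = 1 := by
  classical
  have hle1 := count_le_one tail head hs heul σ hσ hleg
  set U : Finset (Vne s) := Finset.univ.filter (fun v => l.count v = 0) with hUdef
  have hU1 : ∀ v ∈ U, (outdeg tail v.1 = indeg head v.1)
      ∧ ∀ w : Vne s, w ∉ U → numEdges tail head w.1 v.1 = 0 := by
    intro v hv
    have hcv : l.count v = 0 := by
      have := (Finset.mem_filter.mp hv).2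
      exact this
    have hF := fireList_formula tail head _ l hleg v
    rw [hend, hcv] at hF
    have hzero : ((outdeg tail v.1 - indeg head v.1 : ℕ) : ℤ)
        + ∑ w : Vne s, (l.count w : ℤ) * (numEdges tail head w.1 v.1 : ℤ) = 0 := by
      have hsp : ((σ v + (outdeg tail v.1 - indeg head v.1) : ℕ) : ℤ)
          = (σ v : ℤ) + ((outdeg tail v.1 - indeg head v.1 : ℕ) : ℤ) := by push_cast; ring
      rw [hsp] at hF
      push_cast at hF ⊢
      linarith
    have hnn : (0:ℤ) ≤ ∑ w : Vne s, (l.count w : ℤ) * (numEdges tail head w.1 v.1 : ℤ) :=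
      Finset.sum_nonneg fun w _ => by positivity
    have hb : (0:ℤ) ≤ ((outdeg tail v.1 - indeg head v.1 : ℕ) : ℤ) := by positivity
    have hb0 : outdeg tail v.1 - indeg head v.1 = 0 := by
      have : ((outdeg tail v.1 - indeg head v.1 : ℕ) : ℤ) = 0 := by linarith
      exact_mod_cast this
    have hsum0 : ∑ w : Vne s, (l.count w : ℤ) * (numEdges tail head w.1 v.1 : ℤ) = 0 := by
      linarith
    constructor
    · have := heul v.1 v.2
      omega
    · intro w hw
      have hcw : l.count w ≠ 0 := by
        intro h0
        exact hw (Finset.mem_filter.mpr ⟨Finset.mem_univ w, h0⟩)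
      have := (Finset.sum_eq_zero_iff_of_nonneg
        (fun w _ => by positivity)).mp hsum0 w (Finset.mem_univ w)
      have hterm : (l.count w : ℤ) * (numEdges tail head w.1 v.1 : ℤ) = 0 := this
      rcases mul_eq_zero.mp hterm with h1 | h1
      · exact absurd (by exact_mod_cast h1) hcw
      · exact_mod_cast h1
  have hindeg : ∀ v ∈ U, (∑ w ∈ U, numEdges tail head w.1 v.1) = indeg head v.1 := by
    intro v hv
    rw [← sum_Vne_indeg tail head hs v.1]
    exact Finset.sum_subset (Finset.subset_univ U)
      (fun w _ hw => (hU1 v hv).2 w hw)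
  have hsum : ∑ w ∈ U, (∑ v ∈ U, numEdges tail head w.1 v.1) = ∑ w ∈ U, outdeg tail w.1 := by
    rw [Finset.sum_comm]
    calc ∑ v ∈ U, ∑ w ∈ U, numEdges tail head w.1 v.1
        = ∑ v ∈ U, indeg head v.1 := Finset.sum_congr rfl fun v hv => hindeg v hv
      _ = ∑ v ∈ U, outdeg tail v.1 := Finset.sum_congr rfl fun v hv => ((hU1 v hv).1).symm
  have hout : ∀ w ∈ U, (∑ v ∈ U, numEdges tail head w.1 v.1) = outdeg tail w.1 :=
    (Finset.sum_eq_sum_iff_of_le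
      (fun w _ => sum_numEdges_le_outdeg tail head U w.1)).mp hsum
  have hnoexit : ∀ w ∈ U, ∀ y : V, numEdges tail head w.1 y ≠ 0 →
      ∃ hy : y ≠ s, (⟨y, hy⟩ : Vne s) ∈ U := by
    intro w hw y hy
    set I : Finset V := U.image Subtype.val with hI
    have hImg : (∑ y' ∈ I, numEdges tail head w.1 y')
        = ∑ v ∈ U, numEdges tail head w.1 v.1 :=
      Finset.sum_image (fun x _ y _ h => Subtype.ext h)
    have hzero : ∀ y' ∈ Finset.univ \ I, numEdges tail head w.1 y' = 0 := by
      have hsd : (∑ y' ∈ Finset.univ \ I, numEdges tail head w.1 y')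
          + ∑ y' ∈ I, numEdges tail head w.1 y' = ∑ y' : V, numEdges tail head w.1 y' :=
        Finset.sum_sdiff (Finset.subset_univ I)
      have huniv : (∑ y' : V, numEdges tail head w.1 y') = outdeg tail w.1 :=
        (outdeg_eq_sum tail head w.1).symm
      rw [hImg, hout w hw, huniv] at hsd
      have hz0 : ∑ y' ∈ Finset.univ \ I, numEdges tail head w.1 y' = 0 := by omega
      intro y' hy'
      exact (Finset.sum_eq_zero_iff.mp hz0) y' hy'
    by_cases hyI : y ∈ I
    · obtain ⟨v, hvU, hvy⟩ := Finset.mem_image.mp hyI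
      refine ⟨hvy ▸ v.2, ?_⟩
      have : (⟨y, hvy ▸ v.2⟩ : Vne s) = v := by
        apply Subtype.ext
        simp [← hvy]
      rw [this]
      exact hvU
    · exact absurd (hzero y (Finset.mem_sdiff.mpr ⟨Finset.mem_univ y, hyI⟩)) hy
  have hkill : ∀ z : V,
      Relation.ReflTransGen (fun a b => ∃ e, tail e = a ∧ head e = b) z s →
      ∀ hz : z ≠ s, (⟨z, hz⟩ : Vne s) ∈ U → False := by
    intro z hrtg
    induction hrtg using Relation.ReflTransGen.head_induction_on with
    | refl => intro hz _; exact hz rfl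
    | @head a c hac hcs ih =>
      intro hz hU
      obtain ⟨e, he1, he2⟩ := hac
      have hne : numEdges tail head a c ≠ 0 := by
        rw [numEdges]
        have : e ∈ Finset.univ.filter (fun e => tail e = a ∧ head e = c) := by
          simp [he1, he2]
        have := Finset.card_pos.mpr ⟨e, this⟩
        omega
      obtain ⟨hcne, hcU⟩ := hnoexit ⟨a, hz⟩ hU c hne
      exact ih hcne hcU
  intro v
  have hne : l.count v ≠ 0 := by
    intro h0
    have hvU : v ∈ U := Finset.mem_filter.mpr ⟨Finset.mem_univ v, h0⟩
    have : (⟨v.1, v.2⟩ : Vne s) = v := rfl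
    exact hkill v.1 (hglobal v.1) v.2 (this ▸ hvU)
  have := hle1 v
  omega

end BurnAux5
section BurnAux6

variable {V E : Type} [Fintype V] [DecidableEq V] [Fintype E]

theorem allowed_of_burning (tail head : E → V) {s : V}
    (σ : Vne s → ℕ) (l : List (Vne s))
    (hleg : Legal tail head (fun v => σ v + (outdeg tail v.1 - indeg head v.1)) l)
    (hend : fireList tail head (fun v => σ v + (outdeg tail v.1 - indeg head v.1)) l = σ)
    (hcnt : ∀ v, l.count v = 1) : AllowedC tail head s σ := by
  classical
  intro W hW
  obtain ⟨w0, hw0⟩ := hW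
  have hw0l : w0 ∈ l := by
    have := hcnt w0
    exact List.count_pos_iff.mp (by omega)
  obtain ⟨p, v, q, hsplit, hvW, hpW⟩ := exists_first_split (· ∈ W) l ⟨w0, hw0l, hw0⟩
  refine ⟨v, hvW, ?_⟩
  set τ0 := (fun v : Vne s => σ v + (outdeg tail v.1 - indeg head v.1)) with hτ0
  have hassoc : l = (p ++ [v]) ++ q := by simp [hsplit]
  have hlsplit := (legal_append tail head (τ := τ0) (l₁ := p ++ [v]) (l₂ := q)).mp
    (by rw [← hassoc]; exact hleg)
  have hLq := hlsplit.2
  have hLpv := hlsplit.1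
  have hpv := (legal_append tail head (τ := τ0) (l₁ := p) (l₂ := [v])).mp hLpv
  have hA : Active tail (fireList tail head τ0 p) v := hpv.2.1
  have hpv0 : p.count v = 0 := List.count_eq_zero.mpr (fun h => hpW v h hvW)
  have hqv : q.count v = 0 := by
    have hc := hcnt v
    rw [hsplit, List.count_append] at hc
    have hcons : (v :: q).count v = q.count v + 1 := by simp
    omega
  have hqw : ∀ w ∈ W, w ≠ v → q.count w = 1 := by
    intro w hwW hwv
    have hc := hcnt w
    rw [hsplit, List.count_append] at hc
    have hp0 : p.count w = 0 := List.count_eq_zero.mpr (fun h => hpW w h hwW)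
    have hcons : (v :: q).count w = q.count w := by
      simp [List.count_cons, hwv]; exact fun h => hwv (Subtype.ext h.symm)
    omega
  have hendq : fireList tail head (fireList tail head τ0 (p ++ [v])) q = σ := by
    rw [← fireList_append, ← hassoc, hend]
  have hF := fireList_formula tail head _ q hLq v
  rw [hendq, hqv] at hF
  have hmidval : fireList tail head τ0 (p ++ [v]) v
      = fireList tail head τ0 p v + numEdges tail head v.1 v.1 - outdeg tail v.1 := by
    rw [fireList_append]
    simp [fireList, fire]
  have hAle : outdeg tail v.1 ≤ fireList tail head τ0 p v := hA
  have hmid : ((numEdges tail head v.1 v.1 : ℕ) : ℤ)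
      ≤ (fireList tail head τ0 (p ++ [v]) v : ℤ) := by
    rw [hmidval]
    have hle2 : outdeg tail v.1 ≤ fireList tail head τ0 p v + numEdges tail head v.1 v.1 :=
      le_trans hAle (Nat.le_add_right _ _)
    push_cast [hle2]
    have : (outdeg tail v.1 : ℤ) ≤ (fireList tail head τ0 p v : ℤ) := by exact_mod_cast hAle
    linarith
  have hsumlb : ((∑ w ∈ W.erase v, numEdges tail head w.1 v.1 : ℕ) : ℤ)
      ≤ ∑ w : Vne s, (q.count w : ℤ) * (numEdges tail head w.1 v.1 : ℤ) := by
    have hcongr : ((∑ w ∈ W.erase v, numEdges tail head w.1 v.1 : ℕ) : ℤ)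
        = ∑ w ∈ W.erase v, (q.count w : ℤ) * (numEdges tail head w.1 v.1 : ℤ) := by
      push_cast
      refine Finset.sum_congr rfl fun w hw => ?_
      rw [hqw w (Finset.mem_of_mem_erase hw) (Finset.ne_of_mem_erase hw)]
      push_cast
      ring
    rw [hcongr]
    refine Finset.sum_le_sum_of_subset_of_nonneg (Finset.subset_univ _)
      (fun w _ _ => by positivity)
  have final : ((∑ w ∈ W, numEdges tail head w.1 v.1 : ℕ) : ℤ) ≤ (σ v : ℤ) := by
    rw [← Finset.sum_erase_add W _ hvW]
    push_cast at hF hsumlb ⊢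
    linarith
  exact_mod_cast final

theorem recurrent_allowed (tail head : E → V) {s : V} (hs : outdeg tail s = 0)
    (σ : Vne s → ℕ) (hrec : Recurrent tail head σ) : AllowedC tail head s σ := by
  obtain ⟨hst, hacc⟩ := hrec
  obtain ⟨β', l, hleg, hend⟩ := hacc (fun v => indeg head v.1)
  have hall : AllowedC tail head s (fun v => indeg head v.1 + β' v) := by
    intro W hW
    obtain ⟨v, hv⟩ := hW
    exact ⟨v, hv, le_trans (sum_numEdges_le_indeg tail head hs W v.1) (Nat.le_add_right _ _)⟩
  rw [← hend]
  exact allowed_fireList tail head hleg hall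

end BurnAux6
section BurnAux7

variable {V E : Type} [Fintype V] [DecidableEq V] [Fintype E]

theorem counts_one_of_stable (tail head : E → V) {s : V} (hs : outdeg tail s = 0)
    (heul : ∀ v : V, v ≠ s → indeg head v ≤ outdeg tail v)
    (σ : Vne s → ℕ) (hσ : Stable tail σ) (hallow : AllowedC tail head s σ)
    (l : List (Vne s))
    (hleg : Legal tail head (fun v => σ v + (outdeg tail v.1 - indeg head v.1)) l)
    (hstab : Stable tail (fireList tail head
      (fun v => σ v + (outdeg tail v.1 - indeg head v.1)) l)) :
    ∀ v, l.count v = 1 := by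
  classical
  have hle1 := count_le_one tail head hs heul σ hσ hleg
  set U : Finset (Vne s) := Finset.univ.filter (fun v => l.count v = 0) with hUdef
  have hforb : ∀ v ∈ U, (σ v : ℤ) + 1 ≤ ∑ w ∈ U, (numEdges tail head w.1 v.1 : ℤ) := by
    intro v hv
    have hcv : l.count v = 0 := (Finset.mem_filter.mp hv).2
    have hF := fireList_formula tail head _ l hleg v
    rw [hcv] at hF
    have hstabv : (fireList tail head
        (fun v => σ v + (outdeg tail v.1 - indeg head v.1)) l v : ℤ)
        < (outdeg tail v.1 : ℤ) := by exact_mod_cast hstab v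
    have hsd : (∑ w ∈ Finset.univ \ U, (l.count w : ℤ) * (numEdges tail head w.1 v.1 : ℤ))
        + ∑ w ∈ U, (l.count w : ℤ) * (numEdges tail head w.1 v.1 : ℤ)
        = ∑ w : Vne s, (l.count w : ℤ) * (numEdges tail head w.1 v.1 : ℤ) :=
      Finset.sum_sdiff (Finset.subset_univ U)
    have hU0 : ∑ w ∈ U, (l.count w : ℤ) * (numEdges tail head w.1 v.1 : ℤ) = 0 :=
      Finset.sum_eq_zero fun w hw => by
        rw [(Finset.mem_filter.mp hw).2]; simp
    have hU1 : (∑ w ∈ Finset.univ \ U, (l.count w : ℤ) * (numEdges tail head w.1 v.1 : ℤ))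
        = ∑ w ∈ Finset.univ \ U, (numEdges tail head w.1 v.1 : ℤ) := by
      refine Finset.sum_congr rfl fun w hw => ?_
      have hw0 : l.count w ≠ 0 := by
        intro h0
        exact (Finset.mem_sdiff.mp hw).2 (Finset.mem_filter.mpr ⟨Finset.mem_univ w, h0⟩)
      have hw1 : l.count w = 1 := by have := hle1 w; omega
      rw [hw1]; simp
    have hindg : (∑ w ∈ Finset.univ \ U, (numEdges tail head w.1 v.1 : ℤ))
        + ∑ w ∈ U, (numEdges tail head w.1 v.1 : ℤ) = (indeg head v.1 : ℤ) := by
      have h1 : (∑ w ∈ Finset.univ \ U, numEdges tail head w.1 v.1)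
          + ∑ w ∈ U, numEdges tail head w.1 v.1
          = ∑ w : Vne s, numEdges tail head w.1 v.1 :=
        Finset.sum_sdiff (Finset.subset_univ U)
      have h2 := sum_Vne_indeg tail head hs v.1
      have h3 := h1.trans h2
      exact_mod_cast congrArg (Nat.cast : ℕ → ℤ) h3
    have hβc : ((σ v + (outdeg tail v.1 - indeg head v.1) : ℕ) : ℤ)
        = (σ v : ℤ) + (outdeg tail v.1 : ℤ) - (indeg head v.1 : ℤ) := by
      push_cast [heul v.1 v.2]; ring
    rw [hβc] at hF
    push_cast at hF
    linarith
  intro v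
  have hne : l.count v ≠ 0 := by
    intro h0
    have hvU : v ∈ U := Finset.mem_filter.mpr ⟨Finset.mem_univ v, h0⟩
    obtain ⟨w, hwU, hwa⟩ := hallow U ⟨v, hvU⟩
    have h1 := hforb w hwU
    have h2 : ((∑ u ∈ U, numEdges tail head u.1 w.1 : ℕ) : ℤ)
        ≤ (σ w : ℤ) := by exact_mod_cast hwa
    have h3 : ((∑ u ∈ U, numEdges tail head u.1 w.1 : ℕ) : ℤ)
        = ∑ u ∈ U, (numEdges tail head u.1 w.1 : ℤ) := by push_cast; ring
    linarith
  have := hle1 v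
  omega

end BurnAux7

/-- **Burning algorithm.**  Let `G` be an Eulerian digraph with sink `s` (so `s` is a
global sink and every other vertex has out-degree at least its in-degree), and let
`β(v) = outdeg(v) − indeg(v) ≥ 0`.  A stable chip configuration `σ` is recurrent if
and only if `(σ + β)° = σ`; and if `σ` is recurrent, then each non-sink vertex fires
exactly once during the stabilization of `σ + β`. -/
theorem burning_algorithm
    {V E : Type} [Fintype V] [DecidableEq V] [Fintype E]
    (tail head : E → V)
    (s : V) (hs : outdeg tail s = 0)
    (heul : ∀ v : V, v ≠ s → indeg head v ≤ outdeg tail v)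
    (hglobal : ∀ v : V,
      Relation.ReflTransGen (fun a b => ∃ e, tail e = a ∧ head e = b) v s)
    (σ : Vne s → ℕ) (hσ : Stable tail σ) :
    (Recurrent tail head σ ↔
      ∃ l : List (Vne s),
        Legal tail head (fun v => σ v + (outdeg tail v.1 - indeg head v.1)) l ∧
        fireList tail head (fun v => σ v + (outdeg tail v.1 - indeg head v.1)) l = σ) ∧
    (Recurrent tail head σ →
      ∀ l : List (Vne s),
        Legal tail head (fun v => σ v + (outdeg tail v.1 - indeg head v.1)) l →
        Stable tail (fireList tail head (fun v => σ v + (outdeg tail v.1 - indeg head v.1)) l) →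
        ∀ v : Vne s, l.count v = 1) := by
  classical
  constructor
  · constructor
    · -- Recurrent → burning succeeds
      intro hrec
      obtain ⟨l, hleg, hstab⟩ := exists_stab tail head hglobal
        (fun v => σ v + (outdeg tail v.1 - indeg head v.1))
      have hallow := recurrent_allowed tail head hs σ hrec
      have hcnt := counts_one_of_stable tail head hs heul σ hσ hallow l hleg hstab
      refine ⟨l, hleg, funext fun v => ?_⟩
      have hF := fireList_formula tail head _ l hleg v
      rw [hcnt v] at hF
      have hβc : ((σ v + (outdeg tail v.1 - indeg head v.1) : ℕ) : ℤ)
          = (σ v : ℤ) + (outdeg tail v.1 : ℤ) - (indeg head v.1 : ℤ) := by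
        push_cast [heul v.1 v.2]; ring
      have hsum : (∑ w : Vne s, (l.count w : ℤ) * (numEdges tail head w.1 v.1 : ℤ))
          = (indeg head v.1 : ℤ) := by
        have h1 : (∑ w : Vne s, (l.count w : ℤ) * (numEdges tail head w.1 v.1 : ℤ))
            = ∑ w : Vne s, (numEdges tail head w.1 v.1 : ℤ) := by
          refine Finset.sum_congr rfl fun w _ => ?_
          rw [hcnt w]; simp
        rw [h1, ← sum_Vne_indeg tail head hs v.1]
        push_cast; ring
      rw [hβc, hsum] at hF
      have : (fireList tail head
          (fun v => σ v + (outdeg tail v.1 - indeg head v.1)) l v : ℤ) = (σ v : ℤ) := by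
        rw [hF]; push_cast; ring
      exact_mod_cast this
    · -- burning succeeds → Recurrent
      rintro ⟨l₁, hleg1, hend1⟩
      have hcnt1 := counts_one_of_endpoint tail head hs heul hglobal σ hσ l₁ hleg1 hend1
      have hallow := allowed_of_burning tail head σ l₁ hleg1 hend1 hcnt1
      refine ⟨hσ, ?_⟩
      intro ζ
      set μ : Vne s → ℕ := fun v => ζ v + 2 * outdeg tail v.1 with hμ
      obtain ⟨l₂, hleg2, hstab2⟩ := exists_stab tail head hglobal μ
      set r : Vne s → ℕ := fireList tail head μ l₂ with hr
      have hrlt : ∀ v, r v < outdeg tail v.1 := hstab2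
      have hrle : ∀ v, r v ≤ μ v := fun v => by
        have := hrlt v; simp only [hμ]; omega
      set g : Vne s → ℕ := fun v => μ v - r v with hg
      have hgζ : ∀ v, ζ v ≤ g v := fun v => by
        have := hrlt v; simp only [hg, hμ]; omega
      set τ' : Vne s → ℕ := fun v => σ v + g v with hτ'
      have hτ'F : ∀ v : Vne s, (τ' v : ℤ)
          = (σ v : ℤ) + (l₂.count v : ℤ) * (outdeg tail v.1 : ℤ)
            - ∑ w : Vne s, (l₂.count w : ℤ) * (numEdges tail head w.1 v.1 : ℤ) := by
        intro v
        have hrF := fireList_formula tail head μ l₂ hleg2 v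
        rw [← hr] at hrF
        have hgv : (τ' v : ℤ) = (σ v : ℤ) + (μ v : ℤ) - (r v : ℤ) := by
          simp only [hτ', hg]
          push_cast [hrle v]; ring
        rw [hgv]
        linarith
      obtain ⟨l₃, hleg3, hstab3⟩ := exists_stab tail head hglobal τ'
      have hx := lap tail head σ hσ (fun v => l₂.count v) τ' hτ'F l₃ hleg3
      set z : Vne s → ℕ := fun v => l₂.count v - l₃.count v with hz
      have hzc : ∀ w, (z w : ℤ) = (l₂.count w : ℤ) - (l₃.count w : ℤ) := fun w => by
        simp only [hz]
        push_cast [hx w]; ring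
      have hendF : ∀ v : Vne s, (fireList tail head τ' l₃ v : ℤ)
          = (σ v : ℤ) + (z v : ℤ) * (outdeg tail v.1 : ℤ)
            - ∑ w : Vne s, (z w : ℤ) * (numEdges tail head w.1 v.1 : ℤ) := by
        intro v
        have hF3 := fireList_formula tail head τ' l₃ hleg3 v
        rw [hτ'F v] at hF3
        rw [hF3]
        simp only [hzc, sub_mul, Finset.sum_sub_distrib]
        ring
      have hz0 : ∀ v, z v = 0 := by
        by_contra hzne
        push_neg at hzne
        obtain ⟨v1, hv1⟩ := hzne
        set M : ℕ := Finset.univ.sup z with hM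
        have hMge : ∀ w, z w ≤ M := fun w => Finset.le_sup (Finset.mem_univ w)
        have hM1 : 1 ≤ M := le_trans (by omega) (hMge v1)
        set W : Finset (Vne s) := Finset.univ.filter (fun v => z v = M) with hW
        obtain ⟨b, _, hbe⟩ := Finset.exists_mem_eq_sup Finset.univ
          ⟨v1, Finset.mem_univ v1⟩ z
        have hWne : W.Nonempty := ⟨b, Finset.mem_filter.mpr ⟨Finset.mem_univ b, hbe.symm⟩⟩
        have hWforb : ∀ v ∈ W, (σ v : ℤ) + 1
            ≤ ∑ w ∈ W, (numEdges tail head w.1 v.1 : ℤ) := by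
          intro v hvW
          have hzv : z v = M := (Finset.mem_filter.mp hvW).2
          have hstabv : (fireList tail head τ' l₃ v : ℤ) < (outdeg tail v.1 : ℤ) := by
            exact_mod_cast hstab3 v
          have hEv := hendF v
          rw [hzv] at hEv
          have hsd : (∑ w ∈ Finset.univ \ W, (z w : ℤ) * (numEdges tail head w.1 v.1 : ℤ))
              + ∑ w ∈ W, (z w : ℤ) * (numEdges tail head w.1 v.1 : ℤ)
              = ∑ w : Vne s, (z w : ℤ) * (numEdges tail head w.1 v.1 : ℤ) :=
            Finset.sum_sdiff (Finset.subset_univ W)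
          have hWsum : (∑ w ∈ W, (z w : ℤ) * (numEdges tail head w.1 v.1 : ℤ))
              = (M : ℤ) * ∑ w ∈ W, (numEdges tail head w.1 v.1 : ℤ) := by
            rw [Finset.mul_sum]
            refine Finset.sum_congr rfl fun w hw => ?_
            rw [(Finset.mem_filter.mp hw).2]
          have hnW : (∑ w ∈ Finset.univ \ W, (z w : ℤ) * (numEdges tail head w.1 v.1 : ℤ))
              ≤ ((M : ℤ) - 1) * ∑ w ∈ Finset.univ \ W, (numEdges tail head w.1 v.1 : ℤ) := by
            rw [Finset.mul_sum]
            refine Finset.sum_le_sum fun w hw => ?_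
            have hwne : z w ≠ M := fun h =>
              (Finset.mem_sdiff.mp hw).2 (Finset.mem_filter.mpr ⟨Finset.mem_univ w, h⟩)
            have hwb : z w ≤ M - 1 := by have := hMge w; omega
            have hwbz : (z w : ℤ) ≤ (M : ℤ) - 1 := by
              have : ((z w : ℕ) : ℤ) ≤ ((M - 1 : ℕ) : ℤ) := by exact_mod_cast hwb
              have hM1z : ((M - 1 : ℕ) : ℤ) = (M : ℤ) - 1 := by push_cast [hM1]; ring
              linarith
            exact mul_le_mul_of_nonneg_right hwbz (by positivity)
          have hIg : (∑ w ∈ Finset.univ \ W, (numEdges tail head w.1 v.1 : ℤ))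
              + ∑ w ∈ W, (numEdges tail head w.1 v.1 : ℤ) = (indeg head v.1 : ℤ) := by
            have h1 : (∑ w ∈ Finset.univ \ W, numEdges tail head w.1 v.1)
                + ∑ w ∈ W, numEdges tail head w.1 v.1
                = ∑ w : Vne s, numEdges tail head w.1 v.1 :=
              Finset.sum_sdiff (Finset.subset_univ W)
            have h2 := sum_Vne_indeg tail head hs v.1
            exact_mod_cast congrArg (Nat.cast : ℕ → ℤ) (h1.trans h2)
          have hid : (indeg head v.1 : ℤ) ≤ (outdeg tail v.1 : ℤ) := by
            exact_mod_cast heul v.1 v.2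
          have hSle : (∑ w : Vne s, (z w : ℤ) * (numEdges tail head w.1 v.1 : ℤ))
              ≤ ((M : ℤ) - 1) * (∑ w ∈ Finset.univ \ W, (numEdges tail head w.1 v.1 : ℤ))
                + (M : ℤ) * ∑ w ∈ W, (numEdges tail head w.1 v.1 : ℤ) := by
            rw [← hsd, hWsum]; linarith
          have hq1 : ((M : ℤ) - 1) * (∑ w ∈ Finset.univ \ W, (numEdges tail head w.1 v.1 : ℤ))
                + (M : ℤ) * ∑ w ∈ W, (numEdges tail head w.1 v.1 : ℤ)
              = ((M : ℤ) - 1) * ((∑ w ∈ Finset.univ \ W, (numEdges tail head w.1 v.1 : ℤ))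
                + ∑ w ∈ W, (numEdges tail head w.1 v.1 : ℤ))
                + ∑ w ∈ W, (numEdges tail head w.1 v.1 : ℤ) := by ring
          have hq2 : ((M : ℤ) - 1) * ((∑ w ∈ Finset.univ \ W, (numEdges tail head w.1 v.1 : ℤ))
                + ∑ w ∈ W, (numEdges tail head w.1 v.1 : ℤ))
              ≤ ((M : ℤ) - 1) * (outdeg tail v.1 : ℤ) := by
            refine mul_le_mul_of_nonneg_left ?_ ?_
            · rw [hIg]; exact hid
            · have : (1 : ℤ) ≤ (M : ℤ) := by exact_mod_cast hM1
              linarith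
          linarith
        obtain ⟨w, hwW, hwa⟩ := hallow W hWne
        have h1 := hWforb w hwW
        have h2 : ((∑ u ∈ W, numEdges tail head u.1 w.1 : ℕ) : ℤ) ≤ (σ w : ℤ) := by
          exact_mod_cast hwa
        have h3 : ((∑ u ∈ W, numEdges tail head u.1 w.1 : ℕ) : ℤ)
            = ∑ u ∈ W, (numEdges tail head u.1 w.1 : ℤ) := by push_cast; ring
        linarith
      have hend3 : fireList tail head τ' l₃ = σ := by
        funext v
        have hEv := hendF v
        rw [hz0 v] at hEv
        have hsum0 : (∑ w : Vne s, (z w : ℤ) * (numEdges tail head w.1 v.1 : ℤ)) = 0 :=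
          Finset.sum_eq_zero fun w _ => by rw [hz0 w]; simp
        rw [hsum0] at hEv
        have : (fireList tail head τ' l₃ v : ℤ) = (σ v : ℤ) := by rw [hEv]; push_cast; ring
        exact_mod_cast this
      have hfun : (fun v => ζ v + ((σ v + g v) - ζ v)) = τ' := by
        funext v
        have := hgζ v
        simp only [hτ']
        omega
      exact ⟨fun v => (σ v + g v) - ζ v, l₃, by rw [hfun]; exact hleg3,
        by rw [hfun]; exact hend3⟩
  · -- each vertex fires exactly once
    intro hrec l hleg hstab
    exact counts_one_of_stable tail head hs heul σ hσ
      (recurrent_allowed tail head hs σ hrec) l hleg hstab
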